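/- (Larson–Sweedler theorem, integral version.) Let A be an associative unital algebra over ℂ with a full comultiplication Δ. If there exist a faithful left integral and a faithful right integral on A, then the four linear maps on A ⊗ A determined by a ⊗ b ↦ Δ(a)(1 ⊗ b), a ⊗ b ↦ Δ(a)(b ⊗ 1), a ⊗ b ↦ (a ⊗ 1)Δ(b), and a ⊗ b ↦ (1 ⊗ a)Δ(b) are all bijective, and (A, Δ) is a Hopf algebra: there exist a linear map ε : A → ℂ and a linear map S : A → A such that (ε ⊗ id)(Δ(a)) = a, (id ⊗ ε)(Δ(a)) = a, m(S ⊗ id)(Δ(a)) = ε(a)·1 and m(id ⊗ S)(Δ(a)) = ε(a)·1 for all a ∈ A, where m denotes the multiplication map A ⊗ A → A. -/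

import Mathlib

open TensorProduct

noncomputable section

variable {A : Type*} [Ring A] [Algebra ℂ A]

/-- The slice map `id ⊗ ω : A ⊗ A → A`. -/
def sliceR (ω : A →ₗ[ℂ] ℂ) : A ⊗[ℂ] A →ₗ[ℂ] A :=
  (TensorProduct.rid ℂ A).toLinearMap ∘ₗ TensorProduct.map LinearMap.id ω

/-- The slice map `ω ⊗ id : A ⊗ A → A`. -/
def sliceL (ω : A →ₗ[ℂ] ℂ) : A ⊗[ℂ] A →ₗ[ℂ] A :=
  (TensorProduct.lid ℂ A).toLinearMap ∘ₗ TensorProduct.map ω LinearMap.id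

/-- Coassociativity of a comultiplication `Δ : A → A ⊗ A`:
`(Δ ⊗ id) ∘ Δ = (id ⊗ Δ) ∘ Δ` (up to the associator). -/
def IsCoassoc (Δ : A →ₐ[ℂ] A ⊗[ℂ] A) : Prop :=
  ∀ a : A,
    TensorProduct.assoc ℂ A A A (TensorProduct.map Δ.toLinearMap LinearMap.id (Δ a)) =
      TensorProduct.map LinearMap.id Δ.toLinearMap (Δ a)

/-- A left integral: a nonzero functional with `(id ⊗ φ)(Δ a) = φ(a)·1` for all `a`. -/
def IsLeftIntegral (Δ : A →ₐ[ℂ] A ⊗[ℂ] A) (φ : A →ₗ[ℂ] ℂ) : Prop :=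
  φ ≠ 0 ∧ ∀ a : A, sliceR φ (Δ a) = φ a • (1 : A)

/-- A right integral: a nonzero functional with `(ψ ⊗ id)(Δ a) = ψ(a)·1` for all `a`. -/
def IsRightIntegral (Δ : A →ₐ[ℂ] A ⊗[ℂ] A) (ψ : A →ₗ[ℂ] ℂ) : Prop :=
  ψ ≠ 0 ∧ ∀ a : A, sliceL ψ (Δ a) = ψ a • (1 : A)

/-- A faithful functional: the bilinear form `(a, b) ↦ ω(ab)` is non-degenerate. -/
def IsFaithful (ω : A →ₗ[ℂ] ℂ) : Prop :=
  (∀ b : A, (∀ a : A, ω (a * b) = 0) → b = 0) ∧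
  (∀ b : A, (∀ a : A, ω (b * a) = 0) → b = 0)

/-- The left leg of an element `x ∈ A ⊗ A`: the span of `{(id ⊗ ω)(x) : ω ∈ A*}`. -/
def leftLegOf (x : A ⊗[ℂ] A) : Submodule ℂ A :=
  Submodule.span ℂ {y : A | ∃ ω : A →ₗ[ℂ] ℂ, y = sliceR ω x}

/-- The right leg of an element `x ∈ A ⊗ A`: the span of `{(ω ⊗ id)(x) : ω ∈ A*}`. -/
def rightLegOf (x : A ⊗[ℂ] A) : Submodule ℂ A :=
  Submodule.span ℂ {y : A | ∃ ω : A →ₗ[ℂ] ℂ, y = sliceL ω x}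

/-- The left leg of `Δ`: the span of `{(id ⊗ ω)(Δ a) : a ∈ A, ω ∈ A*}`. -/
def leftLeg (Δ : A →ₐ[ℂ] A ⊗[ℂ] A) : Submodule ℂ A :=
  Submodule.span ℂ {y : A | ∃ (a : A) (ω : A →ₗ[ℂ] ℂ), y = sliceR ω (Δ a)}

/-- The right leg of `Δ`: the span of `{(ω ⊗ id)(Δ a) : a ∈ A, ω ∈ A*}`. -/
def rightLeg (Δ : A →ₐ[ℂ] A ⊗[ℂ] A) : Submodule ℂ A :=
  Submodule.span ℂ {y : A | ∃ (a : A) (ω : A →ₗ[ℂ] ℂ), y = sliceL ω (Δ a)}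

/-- A comultiplication is full if both of its legs are all of `A`. -/
def IsFull (Δ : A →ₐ[ℂ] A ⊗[ℂ] A) : Prop :=
  leftLeg Δ = ⊤ ∧ rightLeg Δ = ⊤

/-- The linear map `T₁` with `T₁ (a ⊗ b) = Δ(a) * (1 ⊗ b)`. -/
def T1 (Δ : A →ₐ[ℂ] A ⊗[ℂ] A) : A ⊗[ℂ] A →ₗ[ℂ] A ⊗[ℂ] A :=
  LinearMap.mul' ℂ (A ⊗[ℂ] A) ∘ₗ
    TensorProduct.map Δ.toLinearMap (TensorProduct.mk ℂ A A 1)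

/-- The linear map `T₁'` with `T₁' (a ⊗ b) = Δ(a) * (b ⊗ 1)`. -/
def T1' (Δ : A →ₐ[ℂ] A ⊗[ℂ] A) : A ⊗[ℂ] A →ₗ[ℂ] A ⊗[ℂ] A :=
  LinearMap.mul' ℂ (A ⊗[ℂ] A) ∘ₗ
    TensorProduct.map Δ.toLinearMap ((TensorProduct.mk ℂ A A).flip 1)

/-- The linear map `T₂` with `T₂ (a ⊗ b) = (a ⊗ 1) * Δ(b)`. -/
def T2 (Δ : A →ₐ[ℂ] A ⊗[ℂ] A) : A ⊗[ℂ] A →ₗ[ℂ] A ⊗[ℂ] A :=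
  LinearMap.mul' ℂ (A ⊗[ℂ] A) ∘ₗ
    TensorProduct.map ((TensorProduct.mk ℂ A A).flip 1) Δ.toLinearMap

/-- The linear map `T₂'` with `T₂' (a ⊗ b) = (1 ⊗ a) * Δ(b)`. -/
def T2' (Δ : A →ₐ[ℂ] A ⊗[ℂ] A) : A ⊗[ℂ] A →ₗ[ℂ] A ⊗[ℂ] A :=
  LinearMap.mul' ℂ (A ⊗[ℂ] A) ∘ₗ
    TensorProduct.map (TensorProduct.mk ℂ A A 1) Δ.toLinearMap

/-- A left cointegral: a nonzero element `h` with `Δ(a)(1 ⊗ h) = a ⊗ h` for all `a`. -/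
def IsLeftCointegral (Δ : A →ₐ[ℂ] A ⊗[ℂ] A) (h : A) : Prop :=
  h ≠ 0 ∧ ∀ a : A, Δ a * ((1 : A) ⊗ₜ[ℂ] h) = a ⊗ₜ[ℂ] h

/-- A right cointegral: a nonzero element `k` with `(k ⊗ 1)Δ(a) = k ⊗ a` for all `a`. -/
def IsRightCointegral (Δ : A →ₐ[ℂ] A ⊗[ℂ] A) (k : A) : Prop :=
  k ≠ 0 ∧ ∀ a : A, (k ⊗ₜ[ℂ] (1 : A)) * Δ a = k ⊗ₜ[ℂ] a

/-- `Δ₁₃(a) = (1 ⊗ σ)(Δ(a) ⊗ 1)`, viewed in `A ⊗ (A ⊗ A)`. -/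
def delta13 (Δ : A →ₐ[ℂ] A ⊗[ℂ] A) (a : A) : A ⊗[ℂ] (A ⊗[ℂ] A) :=
  TensorProduct.map LinearMap.id (TensorProduct.comm ℂ A A).toLinearMap
    (TensorProduct.assoc ℂ A A A (Δ a ⊗ₜ[ℂ] (1 : A)))

/-! ### Auxiliary development for the Larson–Sweedler theorem -/

section LSAux

variable (Δ : A →ₐ[ℂ] A ⊗[ℂ] A) (φ ψ : A →ₗ[ℂ] ℂ)

@[simp] lemma sliceR_tmul (ω : A →ₗ[ℂ] ℂ) (a b : A) : sliceR ω (a ⊗ₜ[ℂ] b) = ω b • a := by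
  simp [sliceR]

@[simp] lemma sliceL_tmul (ω : A →ₗ[ℂ] ℂ) (a b : A) : sliceL ω (a ⊗ₜ[ℂ] b) = ω a • b := by
  simp [sliceL]

lemma apply_sliceR (f g : A →ₗ[ℂ] ℂ) (x : A ⊗[ℂ] A) :
    f (sliceR g x) = g (sliceL f x) := by
  induction x using TensorProduct.induction_on with
  | zero => simp
  | tmul u v => simp [mul_comm]
  | add y z hy hz => simp [hy, hz]

lemma sliceR_total_kill (x : A ⊗[ℂ] A) (h : ∀ g : A →ₗ[ℂ] ℂ, sliceR g x = 0) : x = 0 := by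
  classical
  let b := Module.Basis.ofVectorSpace ℂ A
  let E : A ⊗[ℂ] A ≃ₗ[ℂ] (Module.Basis.ofVectorSpaceIndex ℂ A →₀ A) :=
    (TensorProduct.congr (LinearEquiv.refl ℂ A) b.repr) ≪≫ₗ
      TensorProduct.finsuppScalarRight ℂ ℂ A _
  have key : ∀ (y : A ⊗[ℂ] A) i, E y i = sliceR (b.coord i) y := by
    intro y i
    induction y using TensorProduct.induction_on with
    | zero => simp
    | tmul u v => simp [E, Module.Basis.coord]
    | add y z hy hz => simp [map_add, Finsupp.add_apply, hy, hz]
  have hE : E x = 0 := by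
    ext i
    simp [key, h]
  simpa using congrArg E.symm hE

lemma sliceL_eq_sliceR_comm (f : A →ₗ[ℂ] ℂ) (x : A ⊗[ℂ] A) :
    sliceL f x = sliceR f (TensorProduct.comm ℂ A A x) := by
  induction x using TensorProduct.induction_on with
  | zero => simp
  | tmul u v => simp
  | add y z hy hz => simp [hy, hz]

lemma sliceL_total_kill (x : A ⊗[ℂ] A) (h : ∀ g : A →ₗ[ℂ] ℂ, sliceL g x = 0) : x = 0 := by
  have hc : TensorProduct.comm ℂ A A x = 0 := by
    apply sliceR_total_kill
    intro g
    rw [← sliceL_eq_sliceR_comm]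
    exact h g
  simpa using congrArg (TensorProduct.comm ℂ A A).symm hc

lemma kill_L (Φ : A → (A →ₗ[ℂ] ℂ)) (hsep : ∀ a : A, (∀ d, Φ d a = 0) → a = 0)
    (x : A ⊗[ℂ] A) (h : ∀ d, sliceL (Φ d) x = 0) : x = 0 := by
  apply sliceR_total_kill
  intro g
  apply hsep
  intro d
  rw [apply_sliceR (Φ d) g x, h d, map_zero]

lemma kill_R (Φ : A → (A →ₗ[ℂ] ℂ)) (hsep : ∀ a : A, (∀ d, Φ d a = 0) → a = 0)
    (x : A ⊗[ℂ] A) (h : ∀ d, sliceR (Φ d) x = 0) : x = 0 := by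
  apply sliceL_total_kill
  intro g
  apply hsep
  intro d
  rw [← apply_sliceR g (Φ d) x, h d, map_zero]

lemma span_slice_R (Θ : A →ₗ[ℂ] A →ₗ[ℂ] ℂ) (hsep : ∀ v : A, (∀ b, Θ b v = 0) → v = 0)
    (w : A ⊗[ℂ] A) (ω : A →ₗ[ℂ] ℂ) : ∃ b, sliceR ω w = sliceR (Θ b) w := by
  classical
  obtain ⟨s, hs⟩ := TensorProduct.exists_finset w
  let c : A →ₗ[ℂ] (↥s → ℂ) := LinearMap.pi (fun k => Θ.flip (k : A × A).2)
  let t : ↥s → ℂ := fun k => ω (k : A × A).2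
  by_cases ht : t ∈ LinearMap.range c
  · obtain ⟨b, hb⟩ := ht
    refine ⟨b, ?_⟩
    rw [hs, map_sum, map_sum]
    refine Finset.sum_congr rfl (fun k hk => ?_)
    have h1 : Θ b k.2 = ω k.2 := by
      have := congrFun hb ⟨k, hk⟩
      simpa [c, t] using this
    simp [h1]
  · exfalso
    obtain ⟨f, hft, hfmap⟩ :=
      Submodule.exists_dual_map_eq_bot_of_notMem ht inferInstance
    have hker : ∀ b : A, f (c b) = 0 := by
      intro b
      have h1 : f (c b) ∈ Submodule.map f (LinearMap.range c) :=
        Submodule.mem_map_of_mem ⟨b, rfl⟩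
      rw [hfmap] at h1
      simpa using h1
    set v' : A := ∑ i : ↥s, (f fun j => if i = j then 1 else 0) • (i : A × A).2 with hv'
    have hv0 : v' = 0 := by
      apply hsep
      intro b
      have h2 := LinearMap.pi_apply_eq_sum_univ f (c b)
      have h3 : Θ b v' = f (c b) := by
        rw [hv', map_sum, h2]
        refine Finset.sum_congr rfl (fun i _ => ?_)
        have hcb : c b i = Θ b (i : A × A).2 := rfl
        rw [map_smul, hcb]
        simp [smul_eq_mul, mul_comm]
      rw [h3, hker]
    apply hft
    have h4 := LinearMap.pi_apply_eq_sum_univ f t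
    rw [h4]
    have h5 : ∑ i : ↥s, t i • (f fun j => if i = j then 1 else 0) = ω v' := by
      rw [hv', map_sum]
      refine Finset.sum_congr rfl (fun i _ => ?_)
      rw [map_smul]
      simp [t, smul_eq_mul, mul_comm]
    rw [h5, hv0, map_zero]

lemma span_slice_L (Θ : A →ₗ[ℂ] A →ₗ[ℂ] ℂ) (hsep : ∀ v : A, (∀ b, Θ b v = 0) → v = 0)
    (w : A ⊗[ℂ] A) (ω : A →ₗ[ℂ] ℂ) : ∃ b, sliceL ω w = sliceL (Θ b) w := by
  obtain ⟨b, hb⟩ := span_slice_R Θ hsep (TensorProduct.comm ℂ A A w) ω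
  exact ⟨b, by rw [sliceL_eq_sliceR_comm, sliceL_eq_sliceR_comm, hb]⟩

end LSAux

section LSMaps

variable (Δ : A →ₐ[ℂ] A ⊗[ℂ] A) (φ ψ : A →ₗ[ℂ] ℂ)

@[simp] lemma T1_tmul (a b : A) : T1 Δ (a ⊗ₜ[ℂ] b) = Δ a * ((1 : A) ⊗ₜ[ℂ] b) := by
  simp [T1, LinearMap.mul'_apply]

@[simp] lemma T1'_tmul (a b : A) : T1' Δ (a ⊗ₜ[ℂ] b) = Δ a * (b ⊗ₜ[ℂ] (1 : A)) := by
  simp [T1', LinearMap.mul'_apply]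

@[simp] lemma T2_tmul (a b : A) : T2 Δ (a ⊗ₜ[ℂ] b) = (a ⊗ₜ[ℂ] (1 : A)) * Δ b := by
  simp [T2, LinearMap.mul'_apply]

@[simp] lemma T2'_tmul (a b : A) : T2' Δ (a ⊗ₜ[ℂ] b) = ((1 : A) ⊗ₜ[ℂ] a) * Δ b := by
  simp [T2', LinearMap.mul'_apply]

lemma sliceL_mul_one_tmul (w : A ⊗[ℂ] A) (b : A) :
    sliceL ψ (w * ((1 : A) ⊗ₜ[ℂ] b)) = sliceL ψ w * b := by
  induction w using TensorProduct.induction_on with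
  | zero => simp
  | tmul u v => simp [Algebra.TensorProduct.tmul_mul_tmul, smul_mul_assoc]
  | add y z hy hz => simp [add_mul, hy, hz]

lemma sliceR_mul_tmul_one (w : A ⊗[ℂ] A) (b : A) :
    sliceR φ (w * (b ⊗ₜ[ℂ] (1 : A))) = sliceR φ w * b := by
  induction w using TensorProduct.induction_on with
  | zero => simp
  | tmul u v => simp [Algebra.TensorProduct.tmul_mul_tmul, smul_mul_assoc]
  | add y z hy hz => simp [add_mul, hy, hz]

lemma sliceR_tmul_one_mul (w : A ⊗[ℂ] A) (b : A) :
    sliceR φ ((b ⊗ₜ[ℂ] (1 : A)) * w) = b * sliceR φ w := by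
  induction w using TensorProduct.induction_on with
  | zero => simp
  | tmul u v => simp [Algebra.TensorProduct.tmul_mul_tmul, mul_smul_comm]
  | add y z hy hz => simp [mul_add, hy, hz]

lemma sliceL_one_tmul_mul (w : A ⊗[ℂ] A) (b : A) :
    sliceL ψ (((1 : A) ⊗ₜ[ℂ] b) * w) = b * sliceL ψ w := by
  induction w using TensorProduct.induction_on with
  | zero => simp
  | tmul u v => simp [Algebra.TensorProduct.tmul_mul_tmul, mul_smul_comm]
  | add y z hy hz => simp [mul_add, hy, hz]

end LSMaps

section LSInj

variable {Δ : A →ₐ[ℂ] A ⊗[ℂ] A} {φ ψ : A →ₗ[ℂ] ℂ}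

lemma injective_of_zero {f : A ⊗[ℂ] A →ₗ[ℂ] A ⊗[ℂ] A}
    (h : ∀ x, f x = 0 → x = 0) : Function.Injective f := by
  intro x y hxy
  have := h (x - y) (by rw [map_sub, hxy, sub_self])
  exact sub_eq_zero.mp this

lemma T1_injective (hψ : IsRightIntegral Δ ψ) (hψf : IsFaithful ψ) :
    Function.Injective (T1 Δ) := by
  apply injective_of_zero
  intro x hx
  apply kill_L (fun d => ψ ∘ₗ LinearMap.mulLeft ℂ d) (fun a ha => hψf.1 a ha)
  intro d
  have key : ∀ z, sliceL (ψ ∘ₗ LinearMap.mulLeft ℂ d) z = sliceL ψ (Δ d * T1 Δ z) := by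
    intro z
    induction z using TensorProduct.induction_on with
    | zero => simp
    | tmul a b =>
        rw [T1_tmul, ← mul_assoc, ← map_mul, sliceL_mul_one_tmul, hψ.2]
        simp [smul_mul_assoc]
    | add y z hy hz => simp [mul_add, hy, hz]
  rw [key x, hx, mul_zero, map_zero]

lemma T1'_injective (hφ : IsLeftIntegral Δ φ) (hφf : IsFaithful φ) :
    Function.Injective (T1' Δ) := by
  apply injective_of_zero
  intro x hx
  apply kill_L (fun d => φ ∘ₗ LinearMap.mulLeft ℂ d) (fun a ha => hφf.1 a ha)
  intro d
  have key : ∀ z, sliceL (φ ∘ₗ LinearMap.mulLeft ℂ d) z = sliceR φ (Δ d * T1' Δ z) := by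
    intro z
    induction z using TensorProduct.induction_on with
    | zero => simp
    | tmul a b =>
        rw [T1'_tmul, ← mul_assoc, ← map_mul, sliceR_mul_tmul_one, hφ.2]
        simp [smul_mul_assoc]
    | add y z hy hz => simp [mul_add, hy, hz]
  rw [key x, hx, mul_zero, map_zero]

lemma T2_injective (hφ : IsLeftIntegral Δ φ) (hφf : IsFaithful φ) :
    Function.Injective (T2 Δ) := by
  apply injective_of_zero
  intro x hx
  apply kill_R (fun d => φ ∘ₗ LinearMap.mulRight ℂ d) (fun a ha => hφf.2 a ha)
  intro d
  have key : ∀ z, sliceR (φ ∘ₗ LinearMap.mulRight ℂ d) z = sliceR φ (T2 Δ z * Δ d) := by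
    intro z
    induction z using TensorProduct.induction_on with
    | zero => simp
    | tmul a b =>
        rw [T2_tmul, mul_assoc, ← map_mul, sliceR_tmul_one_mul, hφ.2]
        simp [mul_smul_comm]
    | add y z hy hz => simp [add_mul, hy, hz]
  rw [key x, hx, zero_mul, map_zero]

lemma T2'_injective (hψ : IsRightIntegral Δ ψ) (hψf : IsFaithful ψ) :
    Function.Injective (T2' Δ) := by
  apply injective_of_zero
  intro x hx
  apply kill_R (fun d => ψ ∘ₗ LinearMap.mulRight ℂ d) (fun a ha => hψf.2 a ha)
  intro d
  have key : ∀ z, sliceR (ψ ∘ₗ LinearMap.mulRight ℂ d) z = sliceL ψ (T2' Δ z * Δ d) := by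
    intro z
    induction z using TensorProduct.induction_on with
    | zero => simp
    | tmul a b =>
        rw [T2'_tmul, mul_assoc, ← map_mul, sliceL_one_tmul_mul, hψ.2]
        simp [mul_smul_comm]
    | add y z hy hz => simp [add_mul, hy, hz]
  rw [key x, hx, zero_mul, map_zero]

end LSInj

set_option maxHeartbeats 1600000
set_option synthInstance.maxHeartbeats 400000

section LSSurj

variable {Δ : A →ₐ[ℂ] A ⊗[ℂ] A} {φ ψ : A →ₗ[ℂ] ℂ}

lemma assoc_mul (X Y : (A ⊗[ℂ] A) ⊗[ℂ] A) :
    TensorProduct.assoc ℂ A A A (X * Y) =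
      TensorProduct.assoc ℂ A A A X * TensorProduct.assoc ℂ A A A Y := by
  have h : ∀ Z, TensorProduct.assoc ℂ A A A Z = Algebra.TensorProduct.assoc ℂ ℂ ℂ A A A Z := by
    intro Z
    rfl
  rw [h, h, h, map_mul]

/-- slice `φ` on the last leg of `A ⊗ (A ⊗ A)`. -/
def omR (φ : A →ₗ[ℂ] ℂ) : A ⊗[ℂ] (A ⊗[ℂ] A) →ₗ[ℂ] A ⊗[ℂ] A :=
  TensorProduct.map LinearMap.id (sliceR φ)

@[simp] lemma omR_tmul (a : A) (w : A ⊗[ℂ] A) :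
    omR φ (a ⊗ₜ[ℂ] w) = a ⊗ₜ[ℂ] sliceR φ w := by simp [omR]

lemma T1_mul_one_tmul (z : A ⊗[ℂ] A) (c : A) :
    T1 Δ (z * ((1 : A) ⊗ₜ[ℂ] c)) = T1 Δ z * ((1 : A) ⊗ₜ[ℂ] c) := by
  induction z using TensorProduct.induction_on with
  | zero => simp
  | tmul a b => simp [Algebra.TensorProduct.tmul_mul_tmul, mul_assoc]
  | add y z hy hz => simp [add_mul, hy, hz]

lemma t1_aux1 (z : A ⊗[ℂ] A) (v p q : A) :
    omR φ (TensorProduct.assoc ℂ A A A (z ⊗ₜ[ℂ] v) * ((1 : A) ⊗ₜ[ℂ] (p ⊗ₜ[ℂ] q)))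
      = φ (v * q) • (z * ((1 : A) ⊗ₜ[ℂ] p)) := by
  induction z using TensorProduct.induction_on with
  | zero => simp
  | tmul r s =>
      simp [TensorProduct.assoc_tmul, Algebra.TensorProduct.tmul_mul_tmul,
        TensorProduct.tmul_smul, TensorProduct.smul_tmul']
  | add y z hy hz => simp [add_tmul, add_mul, hy, hz, smul_add]

lemma t1_aux2 (u v : A) (w' : A ⊗[ℂ] A) :
    omR φ (TensorProduct.assoc ℂ A A A ((Δ u) ⊗ₜ[ℂ] v) * ((1 : A) ⊗ₜ[ℂ] w'))
      ∈ LinearMap.range (T1 Δ) := by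
  induction w' using TensorProduct.induction_on with
  | zero => simp
  | tmul p q =>
      rw [t1_aux1]
      exact ⟨φ (v * q) • (u ⊗ₜ[ℂ] p), by simp⟩
  | add y z hy hz =>
      rw [TensorProduct.tmul_add, mul_add, map_add]
      exact Submodule.add_mem _ hy hz

lemma t1_aux3 (w w' : A ⊗[ℂ] A) :
    omR φ (TensorProduct.assoc ℂ A A A
        (TensorProduct.map Δ.toLinearMap LinearMap.id w) * ((1 : A) ⊗ₜ[ℂ] w'))
      ∈ LinearMap.range (T1 Δ) := by
  induction w using TensorProduct.induction_on with
  | zero => simp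
  | tmul u v => exact t1_aux2 u v w'
  | add y z hy hz =>
      rw [map_add, map_add, add_mul, map_add]
      exact Submodule.add_mem _ hy hz

lemma t1_aux4 (hφ : IsLeftIntegral Δ φ) (w : A ⊗[ℂ] A) (b : A) :
    omR φ ((TensorProduct.map LinearMap.id Δ.toLinearMap w) * ((1 : A) ⊗ₜ[ℂ] Δ b))
      = (sliceR (φ ∘ₗ LinearMap.mulRight ℂ b) w) ⊗ₜ[ℂ] (1 : A) := by
  induction w using TensorProduct.induction_on with
  | zero => simp
  | tmul u v =>
      simp only [TensorProduct.map_tmul, LinearMap.id_coe, id_eq,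
        Algebra.TensorProduct.tmul_mul_tmul, one_mul, AlgHom.toLinearMap_apply]
      rw [← map_mul, omR_tmul, hφ.2]
      simp only [sliceR_tmul, LinearMap.comp_apply, LinearMap.mulRight_apply]
      rw [TensorProduct.tmul_smul, TensorProduct.smul_tmul']
      simp
  | add y z hy hz => simp [add_mul, hy, hz, TensorProduct.add_tmul]

lemma t1_main (hΔ : IsCoassoc Δ) (hφ : IsLeftIntegral Δ φ) (x b : A) :
    (sliceR (φ ∘ₗ LinearMap.mulRight ℂ b) (Δ x)) ⊗ₜ[ℂ] (1 : A)
      ∈ LinearMap.range (T1 Δ) := by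
  rw [← t1_aux4 hφ (Δ x) b, ← hΔ x]
  exact t1_aux3 (Δ x) (Δ b)

lemma T1_surjective (hΔ : IsCoassoc Δ) (hfull : IsFull Δ)
    (hφ : IsLeftIntegral Δ φ) (hφf : IsFaithful φ) : Function.Surjective (T1 Δ) := by
  have hstab : ∀ y ∈ LinearMap.range (T1 Δ), ∀ c : A,
      y * ((1 : A) ⊗ₜ[ℂ] c) ∈ LinearMap.range (T1 Δ) := by
    rintro _ ⟨z, rfl⟩ c
    exact ⟨z * ((1 : A) ⊗ₜ[ℂ] c), T1_mul_one_tmul z c⟩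
  have hrange : ∀ (a c : A), a ⊗ₜ[ℂ] c ∈ LinearMap.range (T1 Δ) := by
    intro a c
    have ha : a ∈ leftLeg Δ := hfull.1 ▸ Submodule.mem_top
    induction ha using Submodule.span_induction with
    | mem y hy =>
        obtain ⟨x, ω, rfl⟩ := hy
        have hsep : ∀ v : A, (∀ b : A, (((LinearMap.mul ℂ A).flip).compr₂ φ b) v = 0) → v = 0 := by
          intro v hv
          exact hφf.2 v (fun b => hv b)
        obtain ⟨b, hb⟩ := span_slice_R (((LinearMap.mul ℂ A).flip).compr₂ φ) hsep (Δ x) ω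
        have hΘ : (((LinearMap.mul ℂ A).flip).compr₂ φ b) = φ ∘ₗ LinearMap.mulRight ℂ b := by
          ext v; simp
        rw [hb, hΘ]
        have h1 := t1_main hΔ hφ x b
        have h2 := hstab _ h1 c
        have h3 : (sliceR (φ ∘ₗ LinearMap.mulRight ℂ b) (Δ x)) ⊗ₜ[ℂ] c =
            ((sliceR (φ ∘ₗ LinearMap.mulRight ℂ b) (Δ x)) ⊗ₜ[ℂ] (1 : A)) * ((1 : A) ⊗ₜ[ℂ] c) := by
          simp [Algebra.TensorProduct.tmul_mul_tmul]
        rw [h3]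
        exact h2
    | zero => simp
    | add y z _ _ hy hz =>
        rw [TensorProduct.add_tmul]
        exact Submodule.add_mem _ hy hz
    | smul r y _ hy =>
        rw [← TensorProduct.smul_tmul']
        exact Submodule.smul_mem _ r hy
  have htop : LinearMap.range (T1 Δ) = ⊤ := by
    rw [← top_le_iff, ← TensorProduct.span_tmul_eq_top ℂ A A, Submodule.span_le]
    rintro _ ⟨m, n, rfl⟩
    exact hrange m n
  exact LinearMap.range_eq_top.mp htop

end LSSurj

section LSSurj2

variable {Δ : A →ₐ[ℂ] A ⊗[ℂ] A} {φ ψ : A →ₗ[ℂ] ℂ}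

/-- slice `ψ` on the first leg of `A ⊗ (A ⊗ A)`. -/
def omL (ψ : A →ₗ[ℂ] ℂ) : A ⊗[ℂ] (A ⊗[ℂ] A) →ₗ[ℂ] A ⊗[ℂ] A :=
  (TensorProduct.lid ℂ (A ⊗[ℂ] A)).toLinearMap ∘ₗ TensorProduct.map ψ LinearMap.id

@[simp] lemma omL_tmul (a : A) (w : A ⊗[ℂ] A) :
    omL ψ (a ⊗ₜ[ℂ] w) = ψ a • w := by simp [omL]

/-- slice `ψ` on the first leg of `(A ⊗ A) ⊗ A`. -/
def omL2 (ψ : A →ₗ[ℂ] ℂ) : (A ⊗[ℂ] A) ⊗[ℂ] A →ₗ[ℂ] A ⊗[ℂ] A :=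
  TensorProduct.map (sliceL ψ) LinearMap.id

@[simp] lemma omL2_tmul (w : A ⊗[ℂ] A) (v : A) :
    omL2 ψ (w ⊗ₜ[ℂ] v) = (sliceL ψ w) ⊗ₜ[ℂ] v := by simp [omL2]

/-! ### Surjectivity of T1' -/

lemma T1'_mul_tmul_one (z : A ⊗[ℂ] A) (c : A) :
    T1' Δ (z * ((1 : A) ⊗ₜ[ℂ] c)) = T1' Δ z * (c ⊗ₜ[ℂ] (1 : A)) := by
  induction z using TensorProduct.induction_on with
  | zero => simp
  | tmul a b => simp [Algebra.TensorProduct.tmul_mul_tmul, mul_assoc]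
  | add y z hy hz => simp [add_mul, hy, hz]

lemma t1'_aux1 (u r s : A) (Z : A ⊗[ℂ] A) :
    omL ψ ((u ⊗ₜ[ℂ] Z) * (r ⊗ₜ[ℂ] (s ⊗ₜ[ℂ] (1 : A)))) = ψ (u * r) • (Z * (s ⊗ₜ[ℂ] (1 : A))) := by
  rw [Algebra.TensorProduct.tmul_mul_tmul, omL_tmul]

lemma t1'_aux2 (w w' : A ⊗[ℂ] A) :
    omL ψ ((TensorProduct.map LinearMap.id Δ.toLinearMap w) *
        (TensorProduct.assoc ℂ A A A (w' ⊗ₜ[ℂ] (1 : A))))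
      ∈ LinearMap.range (T1' Δ) := by
  induction w using TensorProduct.induction_on with
  | zero => rw [map_zero, zero_mul, map_zero]; exact zero_mem _
  | tmul u v =>
      induction w' using TensorProduct.induction_on with
      | zero => rw [TensorProduct.zero_tmul, map_zero, mul_zero, map_zero]; exact zero_mem _
      | tmul r s =>
          rw [TensorProduct.map_tmul, TensorProduct.assoc_tmul]
          simp only [LinearMap.id_coe, id_eq, AlgHom.toLinearMap_apply]
          rw [t1'_aux1]
          exact ⟨ψ (u * r) • (v ⊗ₜ[ℂ] s), by simp⟩
      | add y z hy hz =>
          rw [TensorProduct.add_tmul, map_add, mul_add, map_add]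
          exact Submodule.add_mem _ hy hz
  | add y z hy hz =>
      rw [map_add, add_mul, map_add]
      exact Submodule.add_mem _ hy hz

lemma t1'_aux3 (d : A) (w : A ⊗[ℂ] A) :
    (TensorProduct.map Δ.toLinearMap LinearMap.id w) * ((Δ d) ⊗ₜ[ℂ] (1 : A)) =
      TensorProduct.map (Δ.toLinearMap ∘ₗ LinearMap.mulRight ℂ d) LinearMap.id w := by
  induction w using TensorProduct.induction_on with
  | zero => simp
  | tmul u v => simp [Algebra.TensorProduct.tmul_mul_tmul, ← map_mul]
  | add y z hy hz => simp [add_mul, hy, hz]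

lemma t1'_aux4a (Z : A ⊗[ℂ] A) (v : A) :
    omL ψ (TensorProduct.assoc ℂ A A A (Z ⊗ₜ[ℂ] v)) = (sliceL ψ Z) ⊗ₜ[ℂ] v := by
  induction Z using TensorProduct.induction_on with
  | zero => simp
  | tmul p q => simp [TensorProduct.assoc_tmul, TensorProduct.smul_tmul']
  | add y z hy hz => simp [TensorProduct.add_tmul, hy, hz]

lemma t1'_aux4 (hψ : IsRightIntegral Δ ψ) (d : A) (w : A ⊗[ℂ] A) :
    omL ψ (TensorProduct.assoc ℂ A A A
        (TensorProduct.map (Δ.toLinearMap ∘ₗ LinearMap.mulRight ℂ d) LinearMap.id w)) =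
      (1 : A) ⊗ₜ[ℂ] (sliceL (ψ ∘ₗ LinearMap.mulRight ℂ d) w) := by
  induction w using TensorProduct.induction_on with
  | zero => simp
  | tmul u v =>
      rw [TensorProduct.map_tmul, t1'_aux4a]
      simp only [LinearMap.comp_apply, LinearMap.mulRight_apply, LinearMap.id_coe, id_eq,
        AlgHom.toLinearMap_apply, sliceL_tmul]
      rw [hψ.2, TensorProduct.smul_tmul]
  | add y z hy hz => simp [hy, hz, TensorProduct.tmul_add]

lemma t1'_main (hΔ : IsCoassoc Δ) (hψ : IsRightIntegral Δ ψ) (x d : A) :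
    (1 : A) ⊗ₜ[ℂ] (sliceL (ψ ∘ₗ LinearMap.mulRight ℂ d) (Δ x))
      ∈ LinearMap.range (T1' Δ) := by
  rw [← t1'_aux4 hψ d (Δ x), ← t1'_aux3 d (Δ x), assoc_mul, hΔ x]
  exact t1'_aux2 (Δ x) (Δ d)

lemma T1'_surjective (hΔ : IsCoassoc Δ) (hfull : IsFull Δ)
    (hψ : IsRightIntegral Δ ψ) (hψf : IsFaithful ψ) : Function.Surjective (T1' Δ) := by
  have hstab : ∀ y ∈ LinearMap.range (T1' Δ), ∀ c : A,
      y * (c ⊗ₜ[ℂ] (1 : A)) ∈ LinearMap.range (T1' Δ) := by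
    rintro _ ⟨z, rfl⟩ c
    exact ⟨z * ((1 : A) ⊗ₜ[ℂ] c), T1'_mul_tmul_one z c⟩
  have hrange : ∀ (c a : A), c ⊗ₜ[ℂ] a ∈ LinearMap.range (T1' Δ) := by
    intro c a
    have ha : a ∈ rightLeg Δ := hfull.2 ▸ Submodule.mem_top
    induction ha using Submodule.span_induction with
    | mem y hy =>
        obtain ⟨x, ω, rfl⟩ := hy
        have hsep : ∀ v : A, (∀ b : A, (((LinearMap.mul ℂ A).flip).compr₂ ψ b) v = 0) → v = 0 := by
          intro v hv
          exact hψf.2 v (fun b => hv b)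
        obtain ⟨d, hd⟩ := span_slice_L (((LinearMap.mul ℂ A).flip).compr₂ ψ) hsep (Δ x) ω
        have hΘ : (((LinearMap.mul ℂ A).flip).compr₂ ψ d) = ψ ∘ₗ LinearMap.mulRight ℂ d := by
          ext v; simp
        rw [hd, hΘ]
        have h1 := t1'_main hΔ hψ x d
        have h2 := hstab _ h1 c
        have h3 : c ⊗ₜ[ℂ] (sliceL (ψ ∘ₗ LinearMap.mulRight ℂ d) (Δ x)) =
            ((1 : A) ⊗ₜ[ℂ] (sliceL (ψ ∘ₗ LinearMap.mulRight ℂ d) (Δ x))) * (c ⊗ₜ[ℂ] (1 : A)) := by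
          simp [Algebra.TensorProduct.tmul_mul_tmul]
        rw [h3]
        exact h2
    | zero => simp
    | add y z _ _ hy hz =>
        rw [TensorProduct.tmul_add]
        exact Submodule.add_mem _ hy hz
    | smul r y _ hy =>
        rw [TensorProduct.tmul_smul]
        exact Submodule.smul_mem _ r hy
  have htop : LinearMap.range (T1' Δ) = ⊤ := by
    rw [← top_le_iff, ← TensorProduct.span_tmul_eq_top ℂ A A, Submodule.span_le]
    rintro _ ⟨m, n, rfl⟩
    exact hrange m n
  exact LinearMap.range_eq_top.mp htop

/-! ### Surjectivity of T2 -/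

lemma T2_tmul_one_mul (z : A ⊗[ℂ] A) (c : A) :
    T2 Δ ((c ⊗ₜ[ℂ] (1 : A)) * z) = (c ⊗ₜ[ℂ] (1 : A)) * T2 Δ z := by
  induction z using TensorProduct.induction_on with
  | zero => simp
  | tmul a b =>
      simp only [Algebra.TensorProduct.tmul_mul_tmul, T2_tmul, one_mul, mul_one, ← mul_assoc]
  | add y z hy hz => simp [mul_add, hy, hz]

lemma t2_aux1 (r s u : A) (z : A ⊗[ℂ] A) :
    omL2 ψ (((r ⊗ₜ[ℂ] s) ⊗ₜ[ℂ] (1 : A)) * ((TensorProduct.assoc ℂ A A A).symm (u ⊗ₜ[ℂ] z)))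
      = ψ (r * u) • ((s ⊗ₜ[ℂ] (1 : A)) * z) := by
  induction z using TensorProduct.induction_on with
  | zero => simp
  | tmul p q =>
      rw [TensorProduct.assoc_symm_tmul]
      simp [Algebra.TensorProduct.tmul_mul_tmul, TensorProduct.smul_tmul']
  | add y z hy hz => simp [TensorProduct.tmul_add, mul_add, hy, hz]

lemma t2_aux2 (w' w : A ⊗[ℂ] A) :
    omL2 ψ ((w' ⊗ₜ[ℂ] (1 : A)) *
        ((TensorProduct.assoc ℂ A A A).symm (TensorProduct.map LinearMap.id Δ.toLinearMap w)))
      ∈ LinearMap.range (T2 Δ) := by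
  induction w using TensorProduct.induction_on with
  | zero => rw [map_zero, map_zero, mul_zero, map_zero]; exact zero_mem _
  | tmul u v =>
      induction w' using TensorProduct.induction_on with
      | zero => rw [TensorProduct.zero_tmul, zero_mul, map_zero]; exact zero_mem _
      | tmul r s =>
          rw [TensorProduct.map_tmul]
          simp only [LinearMap.id_coe, id_eq, AlgHom.toLinearMap_apply]
          rw [t2_aux1]
          exact ⟨ψ (r * u) • (s ⊗ₜ[ℂ] v), by simp⟩
      | add y z hy hz =>
          rw [TensorProduct.add_tmul, add_mul, map_add]
          exact Submodule.add_mem _ hy hz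
  | add y z hy hz =>
      rw [map_add, map_add, mul_add, map_add]
      exact Submodule.add_mem _ hy hz

lemma t2_aux3 (d : A) (w : A ⊗[ℂ] A) :
    ((Δ d) ⊗ₜ[ℂ] (1 : A)) * (TensorProduct.map Δ.toLinearMap LinearMap.id w) =
      TensorProduct.map (Δ.toLinearMap ∘ₗ LinearMap.mulLeft ℂ d) LinearMap.id w := by
  induction w using TensorProduct.induction_on with
  | zero => simp
  | tmul u v => simp [Algebra.TensorProduct.tmul_mul_tmul, ← map_mul]
  | add y z hy hz => simp [mul_add, hy, hz]

lemma t2_aux4 (hψ : IsRightIntegral Δ ψ) (d : A) (w : A ⊗[ℂ] A) :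
    omL2 ψ (TensorProduct.map (Δ.toLinearMap ∘ₗ LinearMap.mulLeft ℂ d) LinearMap.id w) =
      (1 : A) ⊗ₜ[ℂ] (sliceL (ψ ∘ₗ LinearMap.mulLeft ℂ d) w) := by
  induction w using TensorProduct.induction_on with
  | zero => simp
  | tmul u v =>
      rw [TensorProduct.map_tmul, omL2_tmul]
      simp only [LinearMap.comp_apply, LinearMap.mulLeft_apply, LinearMap.id_coe, id_eq,
        AlgHom.toLinearMap_apply, sliceL_tmul]
      rw [hψ.2, TensorProduct.smul_tmul]
  | add y z hy hz => simp [hy, hz, TensorProduct.tmul_add]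

lemma t2_main (hΔ : IsCoassoc Δ) (hψ : IsRightIntegral Δ ψ) (x d : A) :
    (1 : A) ⊗ₜ[ℂ] (sliceL (ψ ∘ₗ LinearMap.mulLeft ℂ d) (Δ x))
      ∈ LinearMap.range (T2 Δ) := by
  have hco : TensorProduct.map Δ.toLinearMap LinearMap.id (Δ x) =
      (TensorProduct.assoc ℂ A A A).symm
        (TensorProduct.map LinearMap.id Δ.toLinearMap (Δ x)) := by
    rw [LinearEquiv.eq_symm_apply]
    exact hΔ x
  rw [← t2_aux4 hψ d (Δ x), ← t2_aux3 d (Δ x), hco]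
  exact t2_aux2 (Δ d) (Δ x)

lemma T2_surjective (hΔ : IsCoassoc Δ) (hfull : IsFull Δ)
    (hψ : IsRightIntegral Δ ψ) (hψf : IsFaithful ψ) : Function.Surjective (T2 Δ) := by
  have hstab : ∀ y ∈ LinearMap.range (T2 Δ), ∀ c : A,
      (c ⊗ₜ[ℂ] (1 : A)) * y ∈ LinearMap.range (T2 Δ) := by
    rintro _ ⟨z, rfl⟩ c
    exact ⟨(c ⊗ₜ[ℂ] (1 : A)) * z, T2_tmul_one_mul z c⟩
  have hrange : ∀ (c a : A), c ⊗ₜ[ℂ] a ∈ LinearMap.range (T2 Δ) := by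
    intro c a
    have ha : a ∈ rightLeg Δ := hfull.2 ▸ Submodule.mem_top
    induction ha using Submodule.span_induction with
    | mem y hy =>
        obtain ⟨x, ω, rfl⟩ := hy
        have hsep : ∀ v : A, (∀ b : A, ((LinearMap.mul ℂ A).compr₂ ψ b) v = 0) → v = 0 := by
          intro v hv
          exact hψf.1 v (fun b => hv b)
        obtain ⟨d, hd⟩ := span_slice_L ((LinearMap.mul ℂ A).compr₂ ψ) hsep (Δ x) ω
        have hΘ : ((LinearMap.mul ℂ A).compr₂ ψ d) = ψ ∘ₗ LinearMap.mulLeft ℂ d := by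
          ext v; simp
        rw [hd, hΘ]
        have h1 := t2_main hΔ hψ x d
        have h2 := hstab _ h1 c
        have h3 : c ⊗ₜ[ℂ] (sliceL (ψ ∘ₗ LinearMap.mulLeft ℂ d) (Δ x)) =
            (c ⊗ₜ[ℂ] (1 : A)) * ((1 : A) ⊗ₜ[ℂ] (sliceL (ψ ∘ₗ LinearMap.mulLeft ℂ d) (Δ x))) := by
          simp [Algebra.TensorProduct.tmul_mul_tmul]
        rw [h3]
        exact h2
    | zero => simp
    | add y z _ _ hy hz =>
        rw [TensorProduct.tmul_add]
        exact Submodule.add_mem _ hy hz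
    | smul r y _ hy =>
        rw [TensorProduct.tmul_smul]
        exact Submodule.smul_mem _ r hy
  have htop : LinearMap.range (T2 Δ) = ⊤ := by
    rw [← top_le_iff, ← TensorProduct.span_tmul_eq_top ℂ A A, Submodule.span_le]
    rintro _ ⟨m, n, rfl⟩
    exact hrange m n
  exact LinearMap.range_eq_top.mp htop

/-! ### Surjectivity of T2' -/

lemma T2'_tmul_one_mul (z : A ⊗[ℂ] A) (c : A) :
    T2' Δ ((c ⊗ₜ[ℂ] (1 : A)) * z) = ((1 : A) ⊗ₜ[ℂ] c) * T2' Δ z := by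
  induction z using TensorProduct.induction_on with
  | zero => simp
  | tmul a b =>
      simp only [Algebra.TensorProduct.tmul_mul_tmul, T2'_tmul, one_mul, mul_one, ← mul_assoc]
  | add y z hy hz => simp [mul_add, hy, hz]

lemma t2'_aux1 (r s v : A) (z : A ⊗[ℂ] A) :
    omR φ (((1 : A) ⊗ₜ[ℂ] (r ⊗ₜ[ℂ] s)) * (TensorProduct.assoc ℂ A A A (z ⊗ₜ[ℂ] v)))
      = φ (s * v) • (((1 : A) ⊗ₜ[ℂ] r) * z) := by
  induction z using TensorProduct.induction_on with
  | zero => simp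
  | tmul p q =>
      rw [TensorProduct.assoc_tmul]
      simp [Algebra.TensorProduct.tmul_mul_tmul, TensorProduct.tmul_smul]
  | add y z hy hz => simp [TensorProduct.add_tmul, add_mul, mul_add, hy, hz]

lemma t2'_aux2 (w' w : A ⊗[ℂ] A) :
    omR φ (((1 : A) ⊗ₜ[ℂ] w') *
        (TensorProduct.assoc ℂ A A A (TensorProduct.map Δ.toLinearMap LinearMap.id w)))
      ∈ LinearMap.range (T2' Δ) := by
  induction w using TensorProduct.induction_on with
  | zero => rw [map_zero, map_zero, mul_zero, map_zero]; exact zero_mem _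
  | tmul u v =>
      induction w' using TensorProduct.induction_on with
      | zero => rw [TensorProduct.tmul_zero, zero_mul, map_zero]; exact zero_mem _
      | tmul r s =>
          rw [TensorProduct.map_tmul]
          simp only [LinearMap.id_coe, id_eq, AlgHom.toLinearMap_apply]
          rw [t2'_aux1]
          exact ⟨φ (s * v) • (r ⊗ₜ[ℂ] u), by simp⟩
      | add y z hy hz =>
          rw [TensorProduct.tmul_add, add_mul, map_add]
          exact Submodule.add_mem _ hy hz
  | add y z hy hz =>
      rw [map_add, map_add, mul_add, map_add]
      exact Submodule.add_mem _ hy hz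

lemma t2'_aux3 (d : A) (w : A ⊗[ℂ] A) :
    ((1 : A) ⊗ₜ[ℂ] (Δ d)) * (TensorProduct.map LinearMap.id Δ.toLinearMap w) =
      TensorProduct.map LinearMap.id (Δ.toLinearMap ∘ₗ LinearMap.mulLeft ℂ d) w := by
  induction w using TensorProduct.induction_on with
  | zero => simp
  | tmul u v => simp [Algebra.TensorProduct.tmul_mul_tmul, ← map_mul]
  | add y z hy hz => simp [mul_add, hy, hz]

lemma t2'_aux4 (hφ : IsLeftIntegral Δ φ) (d : A) (w : A ⊗[ℂ] A) :
    omR φ (TensorProduct.map LinearMap.id (Δ.toLinearMap ∘ₗ LinearMap.mulLeft ℂ d) w) =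
      (sliceR (φ ∘ₗ LinearMap.mulLeft ℂ d) w) ⊗ₜ[ℂ] (1 : A) := by
  induction w using TensorProduct.induction_on with
  | zero => simp
  | tmul u v =>
      rw [TensorProduct.map_tmul, omR_tmul]
      simp only [LinearMap.comp_apply, LinearMap.mulLeft_apply, LinearMap.id_coe, id_eq,
        AlgHom.toLinearMap_apply, sliceR_tmul]
      rw [hφ.2, TensorProduct.tmul_smul, TensorProduct.smul_tmul']
  | add y z hy hz => simp [hy, hz, TensorProduct.add_tmul]

lemma t2'_main (hΔ : IsCoassoc Δ) (hφ : IsLeftIntegral Δ φ) (x d : A) :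
    (sliceR (φ ∘ₗ LinearMap.mulLeft ℂ d) (Δ x)) ⊗ₜ[ℂ] (1 : A)
      ∈ LinearMap.range (T2' Δ) := by
  rw [← t2'_aux4 hφ d (Δ x), ← t2'_aux3 d (Δ x), ← hΔ x]
  exact t2'_aux2 (Δ d) (Δ x)

lemma T2'_surjective (hΔ : IsCoassoc Δ) (hfull : IsFull Δ)
    (hφ : IsLeftIntegral Δ φ) (hφf : IsFaithful φ) : Function.Surjective (T2' Δ) := by
  have hstab : ∀ y ∈ LinearMap.range (T2' Δ), ∀ c : A,
      ((1 : A) ⊗ₜ[ℂ] c) * y ∈ LinearMap.range (T2' Δ) := by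
    rintro _ ⟨z, rfl⟩ c
    exact ⟨(c ⊗ₜ[ℂ] (1 : A)) * z, T2'_tmul_one_mul z c⟩
  have hrange : ∀ (a c : A), a ⊗ₜ[ℂ] c ∈ LinearMap.range (T2' Δ) := by
    intro a c
    have ha : a ∈ leftLeg Δ := hfull.1 ▸ Submodule.mem_top
    induction ha using Submodule.span_induction with
    | mem y hy =>
        obtain ⟨x, ω, rfl⟩ := hy
        have hsep : ∀ v : A, (∀ b : A, ((LinearMap.mul ℂ A).compr₂ φ b) v = 0) → v = 0 := by
          intro v hv
          exact hφf.1 v (fun b => hv b)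
        obtain ⟨d, hd⟩ := span_slice_R ((LinearMap.mul ℂ A).compr₂ φ) hsep (Δ x) ω
        have hΘ : ((LinearMap.mul ℂ A).compr₂ φ d) = φ ∘ₗ LinearMap.mulLeft ℂ d := by
          ext v; simp
        rw [hd, hΘ]
        have h1 := t2'_main hΔ hφ x d
        have h2 := hstab _ h1 c
        have h3 : (sliceR (φ ∘ₗ LinearMap.mulLeft ℂ d) (Δ x)) ⊗ₜ[ℂ] c =
            ((1 : A) ⊗ₜ[ℂ] c) * ((sliceR (φ ∘ₗ LinearMap.mulLeft ℂ d) (Δ x)) ⊗ₜ[ℂ] (1 : A)) := by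
          simp [Algebra.TensorProduct.tmul_mul_tmul]
        rw [h3]
        exact h2
    | zero => simp
    | add y z _ _ hy hz =>
        rw [TensorProduct.add_tmul]
        exact Submodule.add_mem _ hy hz
    | smul r y _ hy =>
        rw [← TensorProduct.smul_tmul']
        exact Submodule.smul_mem _ r hy
  have htop : LinearMap.range (T2' Δ) = ⊤ := by
    rw [← top_le_iff, ← TensorProduct.span_tmul_eq_top ℂ A A, Submodule.span_le]
    rintro _ ⟨m, n, rfl⟩
    exact hrange m n
  exact LinearMap.range_eq_top.mp htop

end LSSurj2

section LSCounit

variable {Δ : A →ₐ[ℂ] A ⊗[ℂ] A} {φ ψ : A →ₗ[ℂ] ℂ}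

lemma sliceL_dtmulone_mul (d : A) (w : A ⊗[ℂ] A) :
    sliceL ψ ((d ⊗ₜ[ℂ] (1 : A)) * w) = sliceL (ψ ∘ₗ LinearMap.mulLeft ℂ d) w := by
  induction w using TensorProduct.induction_on with
  | zero => simp
  | tmul u v => simp [Algebra.TensorProduct.tmul_mul_tmul]
  | add y z hy hz => simp [mul_add, hy, hz]

lemma sliceR_mul_onetmulb (b : A) (w : A ⊗[ℂ] A) :
    sliceR φ (w * ((1 : A) ⊗ₜ[ℂ] b)) = sliceR (φ ∘ₗ LinearMap.mulRight ℂ b) w := by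
  induction w using TensorProduct.induction_on with
  | zero => simp
  | tmul u v => simp [Algebra.TensorProduct.tmul_mul_tmul]
  | add y z hy hz => simp [add_mul, hy, hz]

lemma L_tmul (d x : A) :
    (sliceL ψ ∘ₗ T2 Δ) (d ⊗ₜ[ℂ] x) = sliceL (ψ ∘ₗ LinearMap.mulLeft ℂ d) (Δ x) := by
  rw [LinearMap.comp_apply, T2_tmul, sliceL_dtmulone_mul]

lemma L'_tmul (x b : A) :
    (sliceR φ ∘ₗ T1 Δ) (x ⊗ₜ[ℂ] b) = sliceR (φ ∘ₗ LinearMap.mulRight ℂ b) (Δ x) := by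
  rw [LinearMap.comp_apply, T1_tmul, sliceR_mul_onetmulb]

lemma delta_sliceL (ω : A →ₗ[ℂ] ℂ) (w : A ⊗[ℂ] A) :
    Δ.toLinearMap (sliceL ω w) =
      omL ω (TensorProduct.map LinearMap.id Δ.toLinearMap w) := by
  induction w using TensorProduct.induction_on with
  | zero => simp
  | tmul u v => simp
  | add y z hy hz => simp only [map_add, hy, hz]

/-- slice `ω` on the last leg of `(A ⊗ A) ⊗ A`. -/
def omR2 (ω : A →ₗ[ℂ] ℂ) : (A ⊗[ℂ] A) ⊗[ℂ] A →ₗ[ℂ] A ⊗[ℂ] A :=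
  (TensorProduct.rid ℂ (A ⊗[ℂ] A)).toLinearMap ∘ₗ TensorProduct.map LinearMap.id ω

@[simp] lemma omR2_tmul (w : A ⊗[ℂ] A) (v : A) :
    omR2 ω (w ⊗ₜ[ℂ] v) = ω v • w := by simp [omR2]

lemma delta_sliceR (ω : A →ₗ[ℂ] ℂ) (w : A ⊗[ℂ] A) :
    Δ.toLinearMap (sliceR ω w) =
      omR2 ω (TensorProduct.map Δ.toLinearMap LinearMap.id w) := by
  induction w using TensorProduct.induction_on with
  | zero => simp
  | tmul u v => simp
  | add y z hy hz => simp only [map_add, hy, hz]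

lemma omR2_assoc_symm (ω : A →ₗ[ℂ] ℂ) (u : A) (Z : A ⊗[ℂ] A) :
    omR2 ω ((TensorProduct.assoc ℂ A A A).symm (u ⊗ₜ[ℂ] Z)) = u ⊗ₜ[ℂ] (sliceR ω Z) := by
  induction Z using TensorProduct.induction_on with
  | zero => simp
  | tmul p q =>
      rw [TensorProduct.assoc_symm_tmul, omR2_tmul, sliceR_tmul,
        TensorProduct.smul_tmul', TensorProduct.tmul_smul]
      rw [TensorProduct.smul_tmul']
  | add y z hy hz => simp [TensorProduct.tmul_add, hy, hz]

/-- the map `Z` with `Z (d ⊗ x) = Σ ψ(d₁ u) d₂ ⊗ v` (where `Δd = d₁⊗d₂`, `Δx = u⊗v`). -/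
def Zmap (Δ : A →ₐ[ℂ] A ⊗[ℂ] A) (ψ : A →ₗ[ℂ] ℂ) : A ⊗[ℂ] A →ₗ[ℂ] A ⊗[ℂ] A :=
  TensorProduct.lift <|
    (((LinearMap.mul ℂ (A ⊗[ℂ] (A ⊗[ℂ] A))).compl₁₂
        ((TensorProduct.assoc ℂ A A A).toLinearMap ∘ₗ
          ((TensorProduct.mk ℂ (A ⊗[ℂ] A) A).flip 1) ∘ₗ Δ.toLinearMap)
        ((TensorProduct.map LinearMap.id (TensorProduct.mk ℂ A A 1)) ∘ₗ
          Δ.toLinearMap)).compr₂ (omL ψ))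

lemma Zmap_tmul (d x : A) :
    Zmap Δ ψ (d ⊗ₜ[ℂ] x) =
      omL ψ ((TensorProduct.assoc ℂ A A A (Δ d ⊗ₜ[ℂ] (1 : A))) *
        (TensorProduct.map LinearMap.id (TensorProduct.mk ℂ A A 1) (Δ x))) := by
  simp [Zmap, LinearMap.compr₂_apply, LinearMap.compl₁₂_apply, LinearMap.mul_apply']

lemma E1_aux (w' w : A ⊗[ℂ] A) :
    T2 Δ (omL ψ ((TensorProduct.assoc ℂ A A A (w' ⊗ₜ[ℂ] (1 : A))) *
        (TensorProduct.map LinearMap.id (TensorProduct.mk ℂ A A 1) w))) =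
      omL2 ψ ((w' ⊗ₜ[ℂ] (1 : A)) *
        ((TensorProduct.assoc ℂ A A A).symm (TensorProduct.map LinearMap.id Δ.toLinearMap w))) := by
  induction w using TensorProduct.induction_on with
  | zero => simp
  | tmul u v =>
      induction w' using TensorProduct.induction_on with
      | zero => simp
      | tmul r s =>
          rw [TensorProduct.map_tmul, TensorProduct.map_tmul]
          simp only [LinearMap.id_coe, id_eq, AlgHom.toLinearMap_apply, TensorProduct.mk_apply]
          rw [t2_aux1, TensorProduct.assoc_tmul, Algebra.TensorProduct.tmul_mul_tmul,
            omL_tmul, map_smul, Algebra.TensorProduct.tmul_mul_tmul, one_mul, mul_one,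
            T2_tmul]
      | add y z hy hz =>
          simp only [TensorProduct.add_tmul, map_add, add_mul, hy, hz]
  | add y z hy hz =>
      simp only [map_add, mul_add, hy, hz]

lemma F_aux (w' w : A ⊗[ℂ] A) :
    LinearMap.mul' ℂ A (omL ψ ((TensorProduct.assoc ℂ A A A (w' ⊗ₜ[ℂ] (1 : A))) *
        (TensorProduct.map LinearMap.id (TensorProduct.mk ℂ A A 1) w))) =
      sliceL ψ (w' * w) := by
  induction w using TensorProduct.induction_on with
  | zero => simp
  | tmul u v =>
      induction w' using TensorProduct.induction_on with
      | zero => simp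
      | tmul r s =>
          rw [TensorProduct.map_tmul, TensorProduct.assoc_tmul]
          simp only [LinearMap.id_coe, id_eq, TensorProduct.mk_apply]
          rw [Algebra.TensorProduct.tmul_mul_tmul, omL_tmul, map_smul,
            Algebra.TensorProduct.tmul_mul_tmul, one_mul, mul_one,
            Algebra.TensorProduct.tmul_mul_tmul, LinearMap.mul'_apply, sliceL_tmul]
      | add y z hy hz =>
          simp only [TensorProduct.add_tmul, add_mul, map_add, hy, hz]
  | add y z hy hz =>
      simp only [map_add, mul_add, hy, hz]

lemma one_ne_zero_A (hφ : IsLeftIntegral Δ φ) : (1 : A) ≠ 0 := by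
  intro h1
  apply hφ.1
  ext a
  have : a = 0 := by
    calc a = a * 1 := (mul_one a).symm
    _ = a * 0 := by rw [h1]
    _ = 0 := mul_zero a
  simp [this]

lemma counit_exists (hΔ : IsCoassoc Δ) (hfull : IsFull Δ)
    (hφ : IsLeftIntegral Δ φ) (hφf : IsFaithful φ)
    (hψ : IsRightIntegral Δ ψ) (hψf : IsFaithful ψ) :
    ∃ ε : A →ₗ[ℂ] ℂ, ∀ a : A, sliceL ε (Δ a) = a ∧ sliceR ε (Δ a) = a := by
  classical
  have hone : (1 : A) ≠ 0 := one_ne_zero_A hφ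
  set L : A ⊗[ℂ] A →ₗ[ℂ] A := sliceL ψ ∘ₗ T2 Δ with hLdef
  -- surjectivity of L
  have hLsurj : Function.Surjective L := by
    intro a
    have hmem : ∀ b ∈ rightLeg Δ, b ∈ LinearMap.range L := by
      intro b hb
      induction hb using Submodule.span_induction with
      | mem y hy =>
          obtain ⟨x, ω, rfl⟩ := hy
          have hsep : ∀ v : A, (∀ b : A, ((LinearMap.mul ℂ A).compr₂ ψ b) v = 0) → v = 0 :=
            fun v hv => hψf.1 v (fun b => hv b)
          obtain ⟨d, hd⟩ := span_slice_L ((LinearMap.mul ℂ A).compr₂ ψ) hsep (Δ x) ω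
          have hΘ : ((LinearMap.mul ℂ A).compr₂ ψ d) = ψ ∘ₗ LinearMap.mulLeft ℂ d := by
            ext v; simp
          rw [hd, hΘ, ← L_tmul]
          exact ⟨d ⊗ₜ[ℂ] x, rfl⟩
      | zero => exact zero_mem _
      | add y z _ _ hy hz => exact Submodule.add_mem _ hy hz
      | smul r y _ hy => exact Submodule.smul_mem _ r hy
    exact hmem a (hfull.2 ▸ Submodule.mem_top)
  -- key identities for the map Z
  have hZ1 : ∀ z : A ⊗[ℂ] A, T2 Δ (Zmap Δ ψ z) = (1 : A) ⊗ₜ[ℂ] (L z) := by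
    have hpt : ∀ d x : A, T2 Δ (Zmap Δ ψ (d ⊗ₜ[ℂ] x)) = (1 : A) ⊗ₜ[ℂ] (L (d ⊗ₜ[ℂ] x)) := by
      intro d x
      rw [Zmap_tmul, E1_aux]
      have hco : TensorProduct.map Δ.toLinearMap LinearMap.id (Δ x) =
          (TensorProduct.assoc ℂ A A A).symm
            (TensorProduct.map LinearMap.id Δ.toLinearMap (Δ x)) := by
        rw [LinearEquiv.eq_symm_apply]; exact hΔ x
      rw [← hco, t2_aux3, t2_aux4 hψ, L_tmul]
    intro z
    induction z using TensorProduct.induction_on with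
    | zero => simp
    | tmul d x => exact hpt d x
    | add y z hy hz => rw [map_add, map_add, hy, hz, map_add, TensorProduct.tmul_add]
  have hZ2 : ∀ z : A ⊗[ℂ] A,
      LinearMap.mul' ℂ A (Zmap Δ ψ z) = ψ (LinearMap.mul' ℂ A z) • (1 : A) := by
    have hpt : ∀ d x : A,
        LinearMap.mul' ℂ A (Zmap Δ ψ (d ⊗ₜ[ℂ] x)) = ψ (d * x) • (1 : A) := by
      intro d x
      rw [Zmap_tmul, F_aux, ← map_mul, hψ.2]
    intro z
    induction z using TensorProduct.induction_on with
    | zero => simp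
    | tmul d x => rw [hpt d x, LinearMap.mul'_apply]
    | add y z hy hz => rw [map_add, map_add, hy, hz, map_add, map_add, add_smul]
  -- kernel inclusion, hence ε is well defined
  have hker : LinearMap.ker L ≤ LinearMap.ker (ψ ∘ₗ LinearMap.mul' ℂ A) := by
    intro z hz
    rw [LinearMap.mem_ker] at hz ⊢
    have h2 : Zmap Δ ψ z = 0 := by
      apply T2_injective hφ hφf
      rw [hZ1 z, hz, TensorProduct.tmul_zero, map_zero]
    have h3 := hZ2 z
    rw [h2, map_zero] at h3
    have h4 : ψ (LinearMap.mul' ℂ A z) = 0 := by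
      by_contra hne
      exact hone (by
        have := congrArg (fun y => (ψ (LinearMap.mul' ℂ A z))⁻¹ • y) h3.symm
        simpa [smul_smul, inv_mul_cancel₀ hne] using this)
    simpa using h4
  -- construct ε
  let e := LinearMap.quotKerEquivOfSurjective L hLsurj
  let q : (A ⊗[ℂ] A ⧸ LinearMap.ker L) →ₗ[ℂ] ℂ :=
    Submodule.liftQ (LinearMap.ker L) (ψ ∘ₗ LinearMap.mul' ℂ A) hker
  refine ⟨q ∘ₗ (e.symm : A →ₗ[ℂ] (A ⊗[ℂ] A ⧸ LinearMap.ker L)), ?_⟩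
  set ε : A →ₗ[ℂ] ℂ := q ∘ₗ (e.symm : A →ₗ[ℂ] (A ⊗[ℂ] A ⧸ LinearMap.ker L)) with hεdef
  have hεL : ∀ z : A ⊗[ℂ] A, ε (L z) = ψ (LinearMap.mul' ℂ A z) := by
    intro z
    have h1 : e (Submodule.Quotient.mk z) = L z := rfl
    have h2 : e.symm (L z) = Submodule.Quotient.mk z := by
      rw [← h1, LinearEquiv.symm_apply_apply]
    show q (e.symm (L z)) = _
    rw [h2]
    exact Submodule.liftQ_apply _ _ _
  -- left counit property
  have hleft : ∀ a : A, sliceL ε (Δ a) = a := by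
    have hpt : ∀ z : A ⊗[ℂ] A, sliceL ε (Δ.toLinearMap (L z)) = L z := by
      intro z
      induction z using TensorProduct.induction_on with
      | zero => simp
      | add y z hy hz => simp only [map_add, hy, hz]
      | tmul d x =>
          have hL1 : L (d ⊗ₜ[ℂ] x) = sliceL (ψ ∘ₗ LinearMap.mulLeft ℂ d) (Δ x) := L_tmul d x
          rw [hL1, delta_sliceL, ← hΔ x]
          have key : ∀ w : A ⊗[ℂ] A,
              sliceL ε (omL (ψ ∘ₗ LinearMap.mulLeft ℂ d)
                (TensorProduct.assoc ℂ A A A (TensorProduct.map Δ.toLinearMap LinearMap.id w))) =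
              sliceL (ψ ∘ₗ LinearMap.mulLeft ℂ d) w := by
            intro w
            induction w using TensorProduct.induction_on with
            | zero => simp
            | tmul u v =>
                rw [TensorProduct.map_tmul]
                simp only [LinearMap.id_coe, id_eq, AlgHom.toLinearMap_apply]
                rw [t1'_aux4a, sliceL_tmul]
                have : ε (sliceL (ψ ∘ₗ LinearMap.mulLeft ℂ d) (Δ u)) = ψ (d * u) := by
                  rw [← L_tmul, hεL, LinearMap.mul'_apply]
                rw [this, sliceL_tmul]
                simp
            | add y z hy hz => simp only [map_add, hy, hz]
          exact key (Δ x)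
    intro a
    obtain ⟨z, rfl⟩ := hLsurj a
    exact hpt z
  -- the other factorization: ε ∘ L' = φ ∘ μ
  set L' : A ⊗[ℂ] A →ₗ[ℂ] A := sliceR φ ∘ₗ T1 Δ with hL'def
  have hL'surj : Function.Surjective L' := by
    intro a
    have hmem : ∀ b ∈ leftLeg Δ, b ∈ LinearMap.range L' := by
      intro b hb
      induction hb using Submodule.span_induction with
      | mem y hy =>
          obtain ⟨x, ω, rfl⟩ := hy
          have hsep : ∀ v : A, (∀ b : A, (((LinearMap.mul ℂ A).flip).compr₂ φ b) v = 0) → v = 0 :=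
            fun v hv => hφf.2 v (fun b => hv b)
          obtain ⟨b', hb'⟩ := span_slice_R (((LinearMap.mul ℂ A).flip).compr₂ φ) hsep (Δ x) ω
          have hΘ : ((((LinearMap.mul ℂ A).flip).compr₂ φ) b') = φ ∘ₗ LinearMap.mulRight ℂ b' := by
            ext v; simp
          rw [hb', hΘ, ← L'_tmul]
          exact ⟨x ⊗ₜ[ℂ] b', rfl⟩
      | zero => exact zero_mem _
      | add y z _ _ hy hz => exact Submodule.add_mem _ hy hz
      | smul r y _ hy => exact Submodule.smul_mem _ r hy
    exact hmem a (hfull.1 ▸ Submodule.mem_top)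
  have hεL' : ∀ z : A ⊗[ℂ] A, ε (L' z) = φ (LinearMap.mul' ℂ A z) := by
    have hpt : ∀ x b : A, ε (L' (x ⊗ₜ[ℂ] b)) = φ (x * b) := by
      intro x b
      rw [L'_tmul]
      have key : ∀ w : A ⊗[ℂ] A,
          ε (sliceR (φ ∘ₗ LinearMap.mulRight ℂ b) w) = φ ((sliceL ε w) * b) := by
        intro w
        induction w using TensorProduct.induction_on with
        | zero => simp
        | tmul u v => simp [smul_mul_assoc, mul_comm]
        | add y z hy hz => simp only [map_add, add_mul, hy, hz]
      rw [key (Δ x), hleft x]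
    intro z
    induction z using TensorProduct.induction_on with
    | zero => simp
    | tmul x b => rw [hpt x b, LinearMap.mul'_apply]
    | add y z hy hz => simp only [map_add, hy, hz]
  -- right counit property
  have hright : ∀ a : A, sliceR ε (Δ a) = a := by
    have hpt : ∀ z : A ⊗[ℂ] A, sliceR ε (Δ.toLinearMap (L' z)) = L' z := by
      intro z
      induction z using TensorProduct.induction_on with
      | zero => simp
      | add y z hy hz => simp only [map_add, hy, hz]
      | tmul x b =>
          have hL1 : L' (x ⊗ₜ[ℂ] b) = sliceR (φ ∘ₗ LinearMap.mulRight ℂ b) (Δ x) := L'_tmul x b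
          rw [hL1, delta_sliceR]
          have hco : TensorProduct.map Δ.toLinearMap LinearMap.id (Δ x) =
              (TensorProduct.assoc ℂ A A A).symm
                (TensorProduct.map LinearMap.id Δ.toLinearMap (Δ x)) := by
            rw [LinearEquiv.eq_symm_apply]; exact hΔ x
          rw [hco]
          have key : ∀ w : A ⊗[ℂ] A,
              sliceR ε (omR2 (φ ∘ₗ LinearMap.mulRight ℂ b)
                ((TensorProduct.assoc ℂ A A A).symm
                  (TensorProduct.map LinearMap.id Δ.toLinearMap w))) =
              sliceR (φ ∘ₗ LinearMap.mulRight ℂ b) w := by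
            intro w
            induction w using TensorProduct.induction_on with
            | zero => simp
            | tmul u v =>
                rw [TensorProduct.map_tmul]
                simp only [LinearMap.id_coe, id_eq, AlgHom.toLinearMap_apply]
                rw [omR2_assoc_symm, sliceR_tmul]
                have : ε (sliceR (φ ∘ₗ LinearMap.mulRight ℂ b) (Δ v)) = φ (v * b) := by
                  rw [← L'_tmul, hεL', LinearMap.mul'_apply]
                rw [this, sliceR_tmul]
                simp
            | add y z hy hz => simp only [map_add, hy, hz]
          exact key (Δ x)
    intro a
    obtain ⟨z, rfl⟩ := hL'surj a
    exact hpt z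
  exact fun a => ⟨hleft a, hright a⟩

end LSCounit

section LSAntipode

variable {Δ : A →ₐ[ℂ] A ⊗[ℂ] A}

lemma antipode_exists (hΔ : IsCoassoc Δ) (ε : A →ₗ[ℂ] ℂ)
    (hleft : ∀ a : A, sliceL ε (Δ a) = a) (hright : ∀ a : A, sliceR ε (Δ a) = a)
    (hT1 : Function.Bijective (T1 Δ)) (hT2 : Function.Bijective (T2 Δ)) :
    ∃ S : A →ₗ[ℂ] A, ∀ a : A,
      LinearMap.mul' ℂ A (TensorProduct.map S LinearMap.id (Δ a)) = ε a • (1 : A) ∧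
      LinearMap.mul' ℂ A (TensorProduct.map LinearMap.id S (Δ a)) = ε a • (1 : A) := by
  classical
  let E1 : A ⊗[ℂ] A ≃ₗ[ℂ] A ⊗[ℂ] A := LinearEquiv.ofBijective (T1 Δ) hT1
  let E2 : A ⊗[ℂ] A ≃ₗ[ℂ] A ⊗[ℂ] A := LinearEquiv.ofBijective (T2 Δ) hT2
  have hE1 : ∀ z, E1 z = T1 Δ z := fun z => rfl
  have hE2 : ∀ z, E2 z = T2 Δ z := fun z => rfl
  have h1 : ∀ (w : A ⊗[ℂ] A) (y : A),
      E1.symm (w * ((1 : A) ⊗ₜ[ℂ] y)) = E1.symm w * ((1 : A) ⊗ₜ[ℂ] y) := by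
    intro w y
    apply E1.injective
    rw [E1.apply_symm_apply, hE1, T1_mul_one_tmul, ← hE1, E1.apply_symm_apply]
  have h2 : ∀ (c : A) (w : A ⊗[ℂ] A),
      E2.symm ((c ⊗ₜ[ℂ] (1 : A)) * w) = (c ⊗ₜ[ℂ] (1 : A)) * E2.symm w := by
    intro c w
    apply E2.injective
    rw [E2.apply_symm_apply, hE2, T2_tmul_one_mul, ← hE2, E2.apply_symm_apply]
  -- the two candidate antipodes
  set S : A →ₗ[ℂ] A :=
    sliceL ε ∘ₗ (E1.symm : A ⊗[ℂ] A →ₗ[ℂ] A ⊗[ℂ] A) ∘ₗ ((TensorProduct.mk ℂ A A).flip 1)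
    with hSdef
  set S' : A →ₗ[ℂ] A :=
    sliceR ε ∘ₗ (E2.symm : A ⊗[ℂ] A →ₗ[ℂ] A ⊗[ℂ] A) ∘ₗ (TensorProduct.mk ℂ A A 1)
    with hS'def
  have hSa : ∀ a : A, S a = sliceL ε (E1.symm (a ⊗ₜ[ℂ] (1 : A))) := fun a => rfl
  have hS'a : ∀ a : A, S' a = sliceR ε (E2.symm ((1 : A) ⊗ₜ[ℂ] a)) := fun a => rfl
  -- Φ identities
  have hΦ1 : ∀ z : A ⊗[ℂ] A,
      LinearMap.mul' ℂ A (TensorProduct.map S LinearMap.id z) = sliceL ε (E1.symm z) := by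
    intro z
    induction z using TensorProduct.induction_on with
    | zero => simp
    | tmul x y =>
        rw [TensorProduct.map_tmul, LinearMap.mul'_apply]
        simp only [LinearMap.id_coe, id_eq]
        rw [hSa, ← sliceL_mul_one_tmul, ← h1]
        congr 1
        congr 1
        rw [Algebra.TensorProduct.tmul_mul_tmul, one_mul, mul_one]
    | add y z hy hz => simp only [map_add, hy, hz]
  have hΦ2 : ∀ z : A ⊗[ℂ] A,
      LinearMap.mul' ℂ A (TensorProduct.map LinearMap.id S' z) = sliceR ε (E2.symm z) := by
    intro z
    induction z using TensorProduct.induction_on with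
    | zero => simp
    | tmul x y =>
        rw [TensorProduct.map_tmul, LinearMap.mul'_apply]
        simp only [LinearMap.id_coe, id_eq]
        rw [hS'a, ← sliceR_tmul_one_mul, ← h2]
        congr 1
        congr 1
        rw [Algebra.TensorProduct.tmul_mul_tmul, one_mul, mul_one]
    | add y z hy hz => simp only [map_add, hy, hz]
  -- main antipode identities
  have main1 : ∀ a : A,
      LinearMap.mul' ℂ A (TensorProduct.map S LinearMap.id (Δ a)) = ε a • (1 : A) := by
    intro a
    rw [hΦ1]
    have hinv : E1.symm (Δ a) = a ⊗ₜ[ℂ] (1 : A) := by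
      rw [LinearEquiv.symm_apply_eq, hE1, T1_tmul]
      have : ((1 : A) ⊗ₜ[ℂ] (1 : A)) = (1 : A ⊗[ℂ] A) := rfl
      rw [this, mul_one]
    rw [hinv, sliceL_tmul]
  have main2 : ∀ a : A,
      LinearMap.mul' ℂ A (TensorProduct.map LinearMap.id S' (Δ a)) = ε a • (1 : A) := by
    intro a
    rw [hΦ2]
    have hinv : E2.symm (Δ a) = (1 : A) ⊗ₜ[ℂ] a := by
      rw [LinearEquiv.symm_apply_eq, hE2, T2_tmul]
      have : ((1 : A) ⊗ₜ[ℂ] (1 : A)) = (1 : A ⊗[ℂ] A) := rfl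
      rw [this, one_mul]
    rw [hinv, sliceR_tmul]
  -- convolution algebra argument: S = S'
  let conv : (A →ₗ[ℂ] A) → (A →ₗ[ℂ] A) → (A →ₗ[ℂ] A) := fun f g =>
    LinearMap.mul' ℂ A ∘ₗ TensorProduct.map f g ∘ₗ Δ.toLinearMap
  let econv : A →ₗ[ℂ] A := LinearMap.toSpanSingleton ℂ A 1 ∘ₗ ε
  have heconv : ∀ a : A, econv a = ε a • (1 : A) := fun a => rfl
  have unitR : ∀ f : A →ₗ[ℂ] A, conv f econv = f := by
    intro f
    ext a
    show LinearMap.mul' ℂ A (TensorProduct.map f econv (Δ a)) = f a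
    have key : ∀ w : A ⊗[ℂ] A,
        LinearMap.mul' ℂ A (TensorProduct.map f econv w) = f (sliceR ε w) := by
      intro w
      induction w using TensorProduct.induction_on with
      | zero => simp
      | tmul x y =>
          rw [TensorProduct.map_tmul, LinearMap.mul'_apply, sliceR_tmul, map_smul, heconv]
          rw [mul_smul_comm, mul_one]
      | add y z hy hz => simp only [map_add, hy, hz]
    rw [key, hright]
  have unitL : ∀ f : A →ₗ[ℂ] A, conv econv f = f := by
    intro f
    ext a
    show LinearMap.mul' ℂ A (TensorProduct.map econv f (Δ a)) = f a
    have key : ∀ w : A ⊗[ℂ] A,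
        LinearMap.mul' ℂ A (TensorProduct.map econv f w) = f (sliceL ε w) := by
      intro w
      induction w using TensorProduct.induction_on with
      | zero => simp
      | tmul x y =>
          rw [TensorProduct.map_tmul, LinearMap.mul'_apply, sliceL_tmul, map_smul, heconv]
          rw [smul_mul_assoc, one_mul]
      | add y z hy hz => simp only [map_add, hy, hz]
    rw [key, hleft]
  have hassoc : ∀ f g h : A →ₗ[ℂ] A, conv (conv f g) h = conv f (conv g h) := by
    intro f g h
    ext a
    show LinearMap.mul' ℂ A (TensorProduct.map (conv f g) h (Δ a)) =
      LinearMap.mul' ℂ A (TensorProduct.map f (conv g h) (Δ a))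
    set F1 : (A ⊗[ℂ] A) ⊗[ℂ] A →ₗ[ℂ] A :=
      LinearMap.mul' ℂ A ∘ₗ TensorProduct.map (LinearMap.mul' ℂ A ∘ₗ TensorProduct.map f g) h
      with hF1
    set F2 : A ⊗[ℂ] (A ⊗[ℂ] A) →ₗ[ℂ] A :=
      LinearMap.mul' ℂ A ∘ₗ TensorProduct.map f (LinearMap.mul' ℂ A ∘ₗ TensorProduct.map g h)
      with hF2
    have hA : ∀ w : A ⊗[ℂ] A,
        LinearMap.mul' ℂ A (TensorProduct.map (conv f g) h w) =
          F1 (TensorProduct.map Δ.toLinearMap LinearMap.id w) := by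
      intro w
      induction w using TensorProduct.induction_on with
      | zero => simp
      | tmul x y => rfl
      | add y z hy hz => simp only [map_add, hy, hz]
    have hB : ∀ w : A ⊗[ℂ] A,
        LinearMap.mul' ℂ A (TensorProduct.map f (conv g h) w) =
          F2 (TensorProduct.map LinearMap.id Δ.toLinearMap w) := by
      intro w
      induction w using TensorProduct.induction_on with
      | zero => simp
      | tmul x y => rfl
      | add y z hy hz => simp only [map_add, hy, hz]
    have hC : ∀ ξ : A ⊗[ℂ] (A ⊗[ℂ] A),
        F1 ((TensorProduct.assoc ℂ A A A).symm ξ) = F2 ξ := by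
      intro ξ
      induction ξ using TensorProduct.induction_on with
      | zero => simp
      | tmul x η =>
          induction η using TensorProduct.induction_on with
          | zero => simp
          | tmul y c =>
              rw [TensorProduct.assoc_symm_tmul]
              simp only [hF1, hF2, LinearMap.comp_apply, TensorProduct.map_tmul,
                LinearMap.mul'_apply, LinearMap.id_coe, id_eq, mul_assoc]
          | add y z hy hz => simp only [TensorProduct.tmul_add, map_add, hy, hz]
      | add y z hy hz => simp only [map_add, hy, hz]
    have hco : TensorProduct.map Δ.toLinearMap LinearMap.id (Δ a) =
        (TensorProduct.assoc ℂ A A A).symm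
          (TensorProduct.map LinearMap.id Δ.toLinearMap (Δ a)) := by
      rw [LinearEquiv.eq_symm_apply]; exact hΔ a
    rw [hA, hB, hco, hC]
  have h5 : conv S LinearMap.id = econv := by
    ext a
    show LinearMap.mul' ℂ A (TensorProduct.map S LinearMap.id (Δ a)) = econv a
    rw [main1, heconv]
  have h6 : conv LinearMap.id S' = econv := by
    ext a
    show LinearMap.mul' ℂ A (TensorProduct.map LinearMap.id S' (Δ a)) = econv a
    rw [main2, heconv]
  have hSS' : S = S' := by
    calc S = conv S econv := (unitR S).symm
    _ = conv S (conv LinearMap.id S') := by rw [h6]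
    _ = conv (conv S LinearMap.id) S' := (hassoc _ _ _).symm
    _ = conv econv S' := by rw [h5]
    _ = S' := unitL S'
  refine ⟨S, fun a => ⟨main1 a, ?_⟩⟩
  rw [hSS']
  exact main2 a

end LSAntipode

/-- Larson-Sweedler theorem (integral version): if `Δ` is full and there exist a faithful
left integral and a faithful right integral, then the four canonical maps are bijective and
`(A, Δ)` is a Hopf algebra: there are a counit `ε` and an antipode `S`. -/
theorem larson_sweedler_integrals
    (Δ : A →ₐ[ℂ] A ⊗[ℂ] A) (hΔ : IsCoassoc Δ) (hfull : IsFull Δ)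
    (φ : A →ₗ[ℂ] ℂ) (hφ : IsLeftIntegral Δ φ) (hφf : IsFaithful φ)
    (ψ : A →ₗ[ℂ] ℂ) (hψ : IsRightIntegral Δ ψ) (hψf : IsFaithful ψ) :
    (Function.Bijective (T1 Δ) ∧ Function.Bijective (T1' Δ) ∧
      Function.Bijective (T2 Δ) ∧ Function.Bijective (T2' Δ)) ∧
    ∃ (ε : A →ₗ[ℂ] ℂ) (S : A →ₗ[ℂ] A), ∀ a : A,
      sliceL ε (Δ a) = a ∧ sliceR ε (Δ a) = a ∧
      LinearMap.mul' ℂ A (TensorProduct.map S LinearMap.id (Δ a)) = ε a • (1 : A) ∧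
      LinearMap.mul' ℂ A (TensorProduct.map LinearMap.id S (Δ a)) = ε a • (1 : A) := by
  have hT1 : Function.Bijective (T1 Δ) :=
    ⟨T1_injective hψ hψf, T1_surjective hΔ hfull hφ hφf⟩
  have hT1' : Function.Bijective (T1' Δ) :=
    ⟨T1'_injective hφ hφf, T1'_surjective hΔ hfull hψ hψf⟩
  have hT2 : Function.Bijective (T2 Δ) :=
    ⟨T2_injective hφ hφf, T2_surjective hΔ hfull hψ hψf⟩
  have hT2' : Function.Bijective (T2' Δ) :=
    ⟨T2'_injective hψ hψf, T2'_surjective hΔ hfull hφ hφf⟩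
  obtain ⟨ε, hε⟩ := counit_exists hΔ hfull hφ hφf hψ hψf
  obtain ⟨S, hS⟩ := antipode_exists hΔ ε (fun a => (hε a).1) (fun a => (hε a).2) hT1 hT2
  exact ⟨⟨hT1, hT1', hT2, hT2'⟩, ε, S, fun a => ⟨(hε a).1, (hε a).2, (hS a).1, (hS a).2⟩⟩
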